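/- arXiv:1608.05268 — 2 statements merged into one kernel-verified Lean document; each statement's English description precedes it below -/
import Mathlib

section
/- For all x, y ∈ ℝ³ with x ≠ y, one has 1/|x-y| = (4/π²) ∫₀^∞ r⁻⁵ ( ∫_{ℝ³} exp(-|x-z|²/r²) · exp(-|y-z|²/r²) dz ) dr. -/
open MeasureTheory Real Set

noncomputable section

local notation "E3" => EuclideanSpace ℝ (Fin 3)

lemma fdll_inner (x y : EuclideanSpace ℝ (Fin 3)) {r : ℝ} (hr : 0 < r) :
    (∫ z : EuclideanSpace ℝ (Fin 3),
        Real.exp (-‖x - z‖ ^ 2 / r ^ 2) * Real.exp (-‖y - z‖ ^ 2 / r ^ 2)) =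
      Real.exp (-(‖x - y‖ ^ 2 / 2) * (r ^ 2)⁻¹) * ((π / 2) ^ ((3 : ℝ) / 2) * r ^ 3) := by
  have hr2 : (0 : ℝ) < r ^ 2 := by positivity
  set m : E3 := (2 : ℝ)⁻¹ • (x + y) with hm
  have hpt : ∀ z : E3,
      Real.exp (-‖x - z‖ ^ 2 / r ^ 2) * Real.exp (-‖y - z‖ ^ 2 / r ^ 2) =
        Real.exp (-(2 / r ^ 2) * ‖z - m‖ ^ 2) *
          Real.exp (-(‖x - y‖ ^ 2 / 2) * (r ^ 2)⁻¹) := by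
    intro z
    rw [← Real.exp_add, ← Real.exp_add]
    congr 1
    have pl := parallelogram_law_with_norm ℝ (x - z) (y - z)
    have h1 : x - z + (y - z) = (2 : ℝ) • (m - z) := by
      rw [hm, smul_sub, smul_smul]
      norm_num
      module
    have h2 : x - z - (y - z) = x - y := by abel
    rw [h1, h2, norm_smul] at pl
    have h3 : ‖z - m‖ = ‖m - z‖ := norm_sub_rev _ _
    have h4 : ‖(2 : ℝ)‖ = 2 := by norm_num
    rw [h4] at pl
    have key : ‖x - z‖ ^ 2 + ‖y - z‖ ^ 2 = 2 * ‖z - m‖ ^ 2 + ‖x - y‖ ^ 2 / 2 := by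
      rw [h3]; nlinarith [pl]
    linear_combination (-(r ^ 2)⁻¹) * key
  simp_rw [hpt]
  rw [integral_mul_const, integral_sub_right_eq_self
    (fun z : E3 => Real.exp (-(2 / r ^ 2) * ‖z‖ ^ 2)) m]
  have hb : (0 : ℝ) < 2 / r ^ 2 := by positivity
  rw [GaussianFourier.integral_rexp_neg_mul_sq_norm hb]
  have hfr : (Module.finrank ℝ (EuclideanSpace ℝ (Fin 3)) : ℝ) = 3 := by
    rw [finrank_euclideanSpace_fin]; norm_num
  rw [hfr]
  have h5 : π / (2 / r ^ 2) = π / 2 * r ^ 2 := by field_simp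
  have h6 : (π / 2 * r ^ 2) ^ ((3 : ℝ) / 2) = (π / 2) ^ ((3 : ℝ) / 2) * r ^ 3 := by
    rw [Real.mul_rpow (by positivity) (by positivity)]
    congr 1
    rw [← Real.rpow_natCast r 2, ← Real.rpow_mul hr.le, ← Real.rpow_natCast r 3]
    norm_num
  rw [h5, h6]
  ring

/-- Smooth Fefferman–de la Llave representation of the Coulomb potential:
for `x ≠ y` in `ℝ³`,
`1/|x-y| = (4/π²) ∫₀^∞ r⁻⁵ (∫ exp(-|x-z|²/r²) exp(-|y-z|²/r²) dz) dr`. -/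
theorem fefferman_de_la_llave
    (x y : EuclideanSpace ℝ (Fin 3)) (hxy : x ≠ y) :
    1 / ‖x - y‖ =
      (4 / Real.pi ^ 2) *
        ∫ r in Ioi (0 : ℝ),
          (1 / r ^ 5) *
            ∫ z : EuclideanSpace ℝ (Fin 3),
              Real.exp (-‖x - z‖ ^ 2 / r ^ 2) * Real.exp (-‖y - z‖ ^ 2 / r ^ 2) := by
  have hd : 0 < ‖x - y‖ := by
    rw [norm_pos_iff]; exact sub_ne_zero.mpr hxy
  set d : ℝ := ‖x - y‖ with hdd
  set g : ℝ → ℝ := fun u => Real.exp (-(d ^ 2 / 2) * u ^ 2) with hg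
  have key : ∀ r ∈ Ioi (0 : ℝ),
      (1 / r ^ 5) * (∫ z : EuclideanSpace ℝ (Fin 3),
          Real.exp (-‖x - z‖ ^ 2 / r ^ 2) * Real.exp (-‖y - z‖ ^ 2 / r ^ 2)) =
        (π / 2) ^ ((3 : ℝ) / 2) *
          ((|(-1 : ℝ)| * r ^ ((-1 : ℝ) - 1)) • g (r ^ (-1 : ℝ))) := by
    intro r hr
    rw [mem_Ioi] at hr
    rw [fdll_inner x y hr]
    have h1 : r ^ ((-1 : ℝ) - 1) = (r ^ 2)⁻¹ := by
      rw [show ((-1 : ℝ) - 1) = -(2 : ℕ) by norm_num, Real.rpow_neg hr.le,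
        Real.rpow_natCast]
    have h2 : (r ^ (-1 : ℝ)) ^ 2 = (r ^ 2)⁻¹ := by
      rw [Real.rpow_neg_one, inv_pow]
    rw [h1, hg]
    simp only [smul_eq_mul, h2, abs_neg, abs_one]
    field_simp
    ring
  rw [setIntegral_congr_fun measurableSet_Ioi key, integral_const_mul,
    integral_comp_rpow_Ioi g (by norm_num : (-1 : ℝ) ≠ 0)]
  have hgi : ∫ u in Ioi (0 : ℝ), g u = Real.sqrt (π / (d ^ 2 / 2)) / 2 :=
    integral_gaussian_Ioi (d ^ 2 / 2)
  rw [hgi]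
  have hs : Real.sqrt (π / (d ^ 2 / 2)) = Real.sqrt (2 * π) / d := by
    rw [show π / (d ^ 2 / 2) = 2 * π / d ^ 2 by field_simp,
      Real.sqrt_div (by positivity) (d ^ 2), Real.sqrt_sq hd.le]
  rw [hs]
  have h1 : (π / 2 : ℝ) ^ ((3 : ℝ) / 2) = Real.sqrt (π / 2) ^ 3 := by
    rw [Real.sqrt_eq_rpow, ← Real.rpow_natCast ((π / 2 : ℝ) ^ ((1 : ℝ) / 2)) 3,
      ← Real.rpow_mul (by positivity)]
    norm_num
  have hst : Real.sqrt (π / 2) * Real.sqrt (2 * π) = π := by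
    rw [← Real.sqrt_mul (by positivity), show π / 2 * (2 * π) = π ^ 2 by ring]
    exact Real.sqrt_sq pi_pos.le
  have hs2 : Real.sqrt (π / 2) ^ 2 = π / 2 := Real.sq_sqrt (by positivity)
  have h2 : Real.sqrt (π / 2) ^ 3 * Real.sqrt (2 * π) = π ^ 2 / 2 := by
    calc Real.sqrt (π / 2) ^ 3 * Real.sqrt (2 * π)
        = Real.sqrt (π / 2) ^ 2 * (Real.sqrt (π / 2) * Real.sqrt (2 * π)) := by ring
      _ = π / 2 * π := by rw [hs2, hst]
      _ = π ^ 2 / 2 := by ring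
  have hC : (π / 2 : ℝ) ^ ((3 : ℝ) / 2) * (Real.sqrt (2 * π) / d / 2) = π ^ 2 / (4 * d) := by
    rw [h1]
    calc Real.sqrt (π / 2) ^ 3 * (Real.sqrt (2 * π) / d / 2)
        = Real.sqrt (π / 2) ^ 3 * Real.sqrt (2 * π) / (2 * d) := by ring
      _ = π ^ 2 / 2 / (2 * d) := by rw [h2]
      _ = π ^ 2 / (4 * d) := by ring
  rw [hC]
  have hpi : π ≠ 0 := pi_ne_zero
  field_simp
end
end

section
/- Let ω be a bounded operator on L²(ℝ³) with integral kernel ω(x;y), let z ∈ ℝ³ and r > 0, and let χ(x) = exp(-|x-z|²/r²). Then the commutator admits the representation [χ, ω] = -∑_{i=1}^3 ∫₀¹ χ_{r/√s,z} ( ((x-z)_i/r²)[x_i, ω] + [x_i, ω]((x-z)_i/r²) ) χ_{r/√(1-s),z} ds, where χ_{ρ,z}(x) = exp(-|x-z|²/ρ²) acts by multiplication and [x_i, ω] is the commutator with the i-th coordinate multiplication operator. -/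
open MeasureTheory Real Set

noncomputable section

abbrev E3 := EuclideanSpace ℝ (Fin 3)

lemma exp_lin_integral (c d : ℝ) (hc : c ≠ 0) :
    ∫ s in Ioo (0:ℝ) 1, Real.exp (c * s + d)
      = (Real.exp (c + d) - Real.exp d) / c := by
  rw [← MeasureTheory.integral_Ioc_eq_integral_Ioo,
    ← intervalIntegral.integral_of_le zero_le_one]
  have h : ∀ s ∈ uIcc (0:ℝ) 1,
      HasDerivAt (fun s => Real.exp (c * s + d) / c) (Real.exp (c * s + d)) s := by
    intro s _
    have h1 : HasDerivAt (fun s : ℝ => c * s + d) c s := by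
      simpa using ((hasDerivAt_id s).const_mul c).add_const d
    have h2 := (Real.hasDerivAt_exp (c * s + d)).comp s h1
    have h3 := h2.div_const c
    simpa [mul_div_assoc, div_self hc] using h3
  have hint : IntervalIntegrable (fun s => Real.exp (c * s + d)) volume 0 1 :=
    (Real.continuous_exp.comp (by continuity)).intervalIntegrable 0 1
  rw [intervalIntegral.integral_eq_sub_of_hasDerivAt h hint]
  rw [sub_div]
  norm_num

/-- Duhamel-type representation of the commutator `[χ_{(r,z)}, ω]` at the level of
integral kernels: if `ω` has kernel `k(x;y)` and `χ_{ρ,z}(x) = exp(-|x-z|²/ρ²)`, then the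
kernel `(χ_{r,z}(x) - χ_{r,z}(y)) k(x;y)` of `[χ_{(r,z)}, ω]` equals
`-∑_{i=1}^3 ∫₀¹ χ_{r/√s,z}(x) ( ((x-z)_i/r²)·[x_i,ω](x;y) + [x_i,ω](x;y)·((y-z)_i/r²) )
χ_{r/√(1-s),z}(y) ds`, where `[x_i, ω]` has kernel `(x_i - y_i) k(x;y)`.
(Note `χ_{r/√s,z}(x) = exp(-s|x-z|²/r²)`.) -/
theorem commutator_gaussian_kernel_representation
    (k : E3 → E3 → ℂ) (z : E3) (r : ℝ) (hr : 0 < r) (x y : E3) :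
    ((Real.exp (-‖x - z‖ ^ 2 / r ^ 2) - Real.exp (-‖y - z‖ ^ 2 / r ^ 2) : ℝ) : ℂ) * k x y
      = -∑ i : Fin 3,
          ∫ s in Ioo (0 : ℝ) 1,
            ((Real.exp (-s * ‖x - z‖ ^ 2 / r ^ 2) : ℝ) : ℂ) *
              ( (((x - z) i / r ^ 2 : ℝ) : ℂ) * (((x i - y i : ℝ) : ℂ) * k x y)
                + (((x i - y i : ℝ) : ℂ) * k x y) * (((y - z) i / r ^ 2 : ℝ) : ℂ) ) *
            ((Real.exp (-(1 - s) * ‖y - z‖ ^ 2 / r ^ 2) : ℝ) : ℂ) := by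
  have hr2 : (r : ℝ) ^ 2 ≠ 0 := pow_ne_zero 2 hr.ne'
  set a : ℝ := ‖x - z‖ ^ 2 with ha
  set b : ℝ := ‖y - z‖ ^ 2 with hb
  set c : ℝ := (b - a) / r ^ 2 with hc
  set J : ℝ := ∫ s in Ioo (0:ℝ) 1, Real.exp (c * s + (-b / r ^ 2)) with hJ
  have hstep : ∀ i : Fin 3,
      (∫ s in Ioo (0 : ℝ) 1,
            ((Real.exp (-s * a / r ^ 2) : ℝ) : ℂ) *
              ( (((x - z) i / r ^ 2 : ℝ) : ℂ) * (((x i - y i : ℝ) : ℂ) * k x y)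
                + (((x i - y i : ℝ) : ℂ) * k x y) * (((y - z) i / r ^ 2 : ℝ) : ℂ) ) *
            ((Real.exp (-(1 - s) * b / r ^ 2) : ℝ) : ℂ))
        = (((((x - z) i + (y - z) i) * (x i - y i) / r ^ 2 : ℝ) : ℂ) * k x y) * (J : ℂ) := by
    intro i
    have heq : ∀ s : ℝ,
        ((Real.exp (-s * a / r ^ 2) : ℝ) : ℂ) *
              ( (((x - z) i / r ^ 2 : ℝ) : ℂ) * (((x i - y i : ℝ) : ℂ) * k x y)
                + (((x i - y i : ℝ) : ℂ) * k x y) * (((y - z) i / r ^ 2 : ℝ) : ℂ) ) *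
            ((Real.exp (-(1 - s) * b / r ^ 2) : ℝ) : ℂ)
          = ((((x - z) i + (y - z) i) * (x i - y i) / r ^ 2 : ℝ) : ℂ) * k x y *
              ((Real.exp (c * s + (-b / r ^ 2)) : ℝ) : ℂ) := by
      intro s
      have hexp : Real.exp (-s * a / r ^ 2) * Real.exp (-(1 - s) * b / r ^ 2)
          = Real.exp (c * s + (-b / r ^ 2)) := by
        rw [← Real.exp_add]
        congr 1
        rw [hc]
        field_simp
        ring
      push_cast [← hexp]
      ring
    simp only [heq]
    have hcast : (∫ s in Ioo (0:ℝ) 1, ((Real.exp (c * s + (-b / r ^ 2)) : ℝ) : ℂ)) = (J : ℂ) := by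
      rw [hJ]; exact integral_ofReal
    rw [MeasureTheory.integral_const_mul, hcast]
  simp only [hstep]
  rw [← Finset.sum_mul, ← Finset.sum_mul]
  have hsum : (∑ i : Fin 3, ((((x - z) i + (y - z) i) * (x i - y i) / r ^ 2 : ℝ) : ℂ))
      = (((a - b) / r ^ 2 : ℝ) : ℂ) := by
    rw [← Complex.ofReal_sum]
    congr 1
    rw [← Finset.sum_div]
    congr 1
    have hx : ∀ i : Fin 3, x i - y i = (x - z) i - (y - z) i := by
      intro i
      simp only [PiLp.sub_apply]
      ring
    have hA : a = ∑ i : Fin 3, ((x - z) i) ^ 2 := by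
      rw [ha, EuclideanSpace.norm_eq, Real.sq_sqrt (by positivity)]
      simp [sq_abs]
    have hB : b = ∑ i : Fin 3, ((y - z) i) ^ 2 := by
      rw [hb, EuclideanSpace.norm_eq, Real.sq_sqrt (by positivity)]
      simp [sq_abs]
    rw [hA, hB, ← Finset.sum_sub_distrib]
    apply Finset.sum_congr rfl
    intro i _
    rw [hx i]
    ring
  rw [hsum]
  by_cases hab : a = b
  · simp [hab]
  · have hcne : c ≠ 0 := by
      rw [hc]
      exact div_ne_zero (sub_ne_zero.mpr (Ne.symm hab)) hr2
    have hJval : J = (Real.exp (-a / r ^ 2) - Real.exp (-b / r ^ 2)) / c := by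
      rw [hJ, exp_lin_integral c _ hcne]
      congr 2
      rw [hc]
      field_simp
      ring
    have h2 : (a - b) / r ^ 2 = -c := by rw [hc]; ring
    rw [hJval, h2]
    have hcC : (c : ℂ) ≠ 0 := Complex.ofReal_ne_zero.mpr hcne
    push_cast
    field_simp
end
end
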